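/- Let g_aux ∈ ℝ^D, S a subspace with orthonormal basis {u_i}, g_prim ∈ S, and decompose g_aux = g⊥ + g⁺ + g⁻ where g⊥ ∈ Sᗮ and g⁺, g⁻ are the in-span components agreeing/disagreeing in coordinate sign with g_prim. Then for η⊥, η⁺ ≥ 0 and η⁻ ≤ 0, the reweighted vector g̃ = η⊥ g⊥ + η⁺ g⁺ + η⁻ g⁻ satisfies ⟨g̃, g_prim⟩ ≥ 0. -/
import Mathlib


open RealInnerProductSpace Finset

/-- With `g_aux = g⊥ + g⁺ + g⁻` (in-span projection split by coordinate-sign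
agreement with `g_prim ∈ S`, `g⊥` the out-of-span part), if `η⊥, η⁺ ≥ 0` and `η⁻ ≤ 0`
then `⟪η⊥ g⊥ + η⁺ g⁺ + η⁻ g⁻, g_prim⟫ ≥ 0`. -/
theorem stmt_5 (D K : ℕ) (u : Fin K → EuclideanSpace ℝ (Fin D))
    (hu : Orthonormal ℝ u)
    (gprim gaux : EuclideanSpace ℝ (Fin D))
    (pc : Fin K → ℝ) (hprim : gprim = ∑ i, pc i • u i)
    (gpm gplus gminus gperp : EuclideanSpace ℝ (Fin D))
    (hpm : gpm = ∑ i, ⟪u i, gaux⟫ • u i)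
    (hplus : gplus = ∑ i ∈ univ.filter (fun i => 0 ≤ ⟪u i, gaux⟫ * ⟪u i, gprim⟫),
        ⟪u i, gaux⟫ • u i)
    (hminus : gminus = gpm - gplus)
    (hperp : gperp = gaux - gpm)
    (ηperp ηplus ηminus : ℝ)
    (hηperp : 0 ≤ ηperp) (hηplus : 0 ≤ ηplus) (hηminus : ηminus ≤ 0) :
    0 ≤ ⟪ηperp • gperp + ηplus • gplus + ηminus • gminus, gprim⟫ := by
  -- inner of sums
  have hsum : ∀ s : Finset (Fin K),
      ⟪∑ i ∈ s, ⟪u i, gaux⟫ • u i, gprim⟫ = ∑ i ∈ s, ⟪u i, gaux⟫ * ⟪u i, gprim⟫ := by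
    intro s
    rw [sum_inner]
    exact Finset.sum_congr rfl fun i _ => real_inner_smul_left _ _ _
  have hperp0 : ⟪gperp, gprim⟫ = 0 := by
    have huj : ∀ j, ⟪gpm, u j⟫ = ⟪gaux, u j⟫ := by
      intro j
      rw [hpm, sum_inner]
      simp only [real_inner_smul_left]
      rw [Finset.sum_eq_single j]
      · rw [orthonormal_iff_ite.mp hu, if_pos rfl, mul_one, real_inner_comm]
      · intro b _ hb
        rw [orthonormal_iff_ite.mp hu]
        simp [hb]
      · simp
    rw [hperp, hprim, inner_sum]
    apply Finset.sum_eq_zero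
    intro j _
    rw [real_inner_smul_right, inner_sub_left, huj j]
    ring
  have hplus0 : 0 ≤ ⟪gplus, gprim⟫ := by
    rw [hplus, hsum]
    apply Finset.sum_nonneg
    intro i hi
    exact (Finset.mem_filter.mp hi).2
  have hminus0 : ⟪gminus, gprim⟫ ≤ 0 := by
    rw [hminus, inner_sub_left, hpm, hplus, hsum, hsum,
      ← Finset.sum_filter_add_sum_filter_not univ
        (fun i => 0 ≤ ⟪u i, gaux⟫ * ⟪u i, gprim⟫)]
    simp only [add_sub_cancel_left]
    apply Finset.sum_nonpos
    intro i hi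
    have := (Finset.mem_filter.mp hi).2
    push_neg at this
    exact this.le
  rw [inner_add_left, inner_add_left, real_inner_smul_left, real_inner_smul_left,
    real_inner_smul_left, hperp0]
  have h1 : 0 ≤ ηplus * ⟪gplus, gprim⟫ := mul_nonneg hηplus hplus0
  have h2 : 0 ≤ ηminus * ⟪gminus, gprim⟫ := mul_nonneg_iff.mpr (Or.inr ⟨hηminus, hminus0⟩)
  nlinarith
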